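/- For complex numbers A, a_1, a_2, X with A ≠ 1, a_1 ≠ a_2, and |A a_1 X| < 1, |A a_2 X| < 1, |A^{-1} a_1 X| < 1, |A^{-1} a_2 X| < 1, the series Σ_{k=0}^∞ ((A^{k+1} - A^{-k})/(A-1)) · ((a_1^{k+1} - a_2^{k+1})/(a_1 - a_2)) · X^k converges and equals (1 + (a_1+a_2)X - ((A^2+A+1)/A) a_1 a_2 X^2) / ((1-A a_1 X)(1-A a_2 X)(1-A^{-1} a_1 X)(1-A^{-1} a_2 X)). -/

import Mathlib

set_option maxHeartbeats 1000000 in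
theorem first_sum_unramified (A a₁ a₂ X : ℂ) (hA0 : A ≠ 0) (ha10 : a₁ ≠ 0) (ha20 : a₂ ≠ 0)
    (hX0 : X ≠ 0) (hA : A ≠ 1) (ha : a₁ ≠ a₂)
    (h1 : ‖A * a₁ * X‖ < 1) (h2 : ‖A * a₂ * X‖ < 1)
    (h3 : ‖A⁻¹ * a₁ * X‖ < 1) (h4 : ‖A⁻¹ * a₂ * X‖ < 1) :
    HasSum (fun k : ℕ =>
        ((A ^ (k + 1) - A ^ (-(k : ℤ))) / (A - 1))
          * ((a₁ ^ (k + 1) - a₂ ^ (k + 1)) / (a₁ - a₂)) * X ^ k)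
      ((1 + (a₁ + a₂) * X - ((A ^ 2 + A + 1) / A) * a₁ * a₂ * X ^ 2)
        / ((1 - A * a₁ * X) * (1 - A * a₂ * X) * (1 - A⁻¹ * a₁ * X) * (1 - A⁻¹ * a₂ * X))) := by
  have hAne : A - 1 ≠ 0 := sub_ne_zero.mpr hA
  have hane : a₁ - a₂ ≠ 0 := sub_ne_zero.mpr ha
  have d1 : (1 : ℂ) - A * a₁ * X ≠ 0 := by
    intro h; rw [sub_eq_zero] at h; rw [← h] at h1; simp at h1
  have d2 : (1 : ℂ) - A * a₂ * X ≠ 0 := by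
    intro h; rw [sub_eq_zero] at h; rw [← h] at h2; simp at h2
  have d3 : (1 : ℂ) - A⁻¹ * a₁ * X ≠ 0 := by
    intro h; rw [sub_eq_zero] at h; rw [← h] at h3; simp at h3
  have d4 : (1 : ℂ) - A⁻¹ * a₂ * X ≠ 0 := by
    intro h; rw [sub_eq_zero] at h; rw [← h] at h4; simp at h4
  have g1 := (hasSum_geometric_of_norm_lt_one (ξ := A * a₁ * X) h1).mul_left
    (A * a₁ / ((A - 1) * (a₁ - a₂)))
  have g2 := (hasSum_geometric_of_norm_lt_one (ξ := A * a₂ * X) h2).mul_left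
    (A * a₂ / ((A - 1) * (a₁ - a₂)))
  have g3 := (hasSum_geometric_of_norm_lt_one (ξ := A⁻¹ * a₁ * X) h3).mul_left
    (a₁ / ((A - 1) * (a₁ - a₂)))
  have g4 := (hasSum_geometric_of_norm_lt_one (ξ := A⁻¹ * a₂ * X) h4).mul_left
    (a₂ / ((A - 1) * (a₁ - a₂)))
  have G := ((g1.sub g2).sub g3).add g4
  convert G using 1
  · rfl
  · funext k
    rw [zpow_neg, zpow_natCast, ← inv_pow]
    simp only [mul_pow, div_mul_eq_div_div]
    ring
  · have hD : (A - 1) * (a₁ - a₂) ≠ 0 := mul_ne_zero hAne hane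
    have e : ∀ c r : ℂ, c / ((A - 1) * (a₁ - a₂)) * r⁻¹ = c / ((A - 1) * (a₁ - a₂) * r) := by
      intro c r; rw [← div_div, ← div_eq_mul_inv, div_div, div_div, mul_assoc]
    rw [e, e, e, e,
      div_sub_div _ _ (mul_ne_zero hD d1) (mul_ne_zero hD d2),
      div_sub_div _ _ (mul_ne_zero (mul_ne_zero hD d1) (mul_ne_zero hD d2)) (mul_ne_zero hD d3),
      div_add_div _ _ (mul_ne_zero (mul_ne_zero (mul_ne_zero hD d1) (mul_ne_zero hD d2))
        (mul_ne_zero hD d3)) (mul_ne_zero hD d4),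
      div_eq_div_iff (mul_ne_zero (mul_ne_zero (mul_ne_zero d1 d2) d3) d4)
        (mul_ne_zero (mul_ne_zero (mul_ne_zero (mul_ne_zero hD d1) (mul_ne_zero hD d2))
          (mul_ne_zero hD d3)) (mul_ne_zero hD d4))]
    field_simp
    ring
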